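/- Let f be μ-strongly convex with L-Lipschitz gradient on ℝ^N and g proper closed convex. For the proximal gradient iteration Y⁺ = prox_{αg}(Y − α∇f(Y)) with step-size α ∈ (0, 1/L], and Y* the unique minimizer of f + g, one has ‖Y⁺ − Y*‖² ≤ (1 − μα) ‖Y − Y*‖². -/

import Mathlib

set_option maxHeartbeats 1000000

open Set Filter Topology InnerProductSpace

local notation "⟪" x ", " y "⟫" => @inner ℝ _ _ x y

variable {F : Type*} [NormedAddCommGroup F] [InnerProductSpace ℝ F] [CompleteSpace F]

/-- Directional difference quotient converges to the inner product with the gradient. -/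
lemma aux_tendsto {f : F → ℝ} {f'x x : F} (h : HasGradientAt f f'x x) (d : F) :
    Tendsto (fun t : ℝ => (f (x + t • d) - f x) / t) (𝓝[>] (0:ℝ)) (𝓝 (⟪f'x, d⟫)) := by
  have hc : HasDerivAt (fun t : ℝ => x + t • d) d 0 := by
    simpa using ((hasDerivAt_id (0:ℝ)).smul_const d).const_add x
  have hf : HasFDerivAt f (toDual ℝ F f'x) (x + (0:ℝ) • d) := by
    simpa using h.hasFDerivAt
  have hψ : HasDerivAt (fun t : ℝ => f (x + t • d)) ⟪f'x, d⟫ 0 := by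
    exact hf.comp_hasDerivAt 0 hc
  have h1 := hasDerivAt_iff_tendsto_slope.mp hψ
  have h2 := h1.mono_left
    (nhdsWithin_mono 0 (fun t ht => mem_compl_singleton_iff.mpr (ne_of_gt ht)))
  refine h2.congr fun t => ?_
  simp [slope_def_field]

/-- Gradient inequality for convex functions. -/
lemma convex_grad_ineq {f : F → ℝ} (hf : ConvexOn ℝ univ f) {f'x x : F}
    (h : HasGradientAt f f'x x) (y : F) :
    f x + ⟪f'x, y - x⟫ ≤ f y := by
  have key : ∀ᶠ t in 𝓝[>] (0:ℝ), (f (x + t • (y - x)) - f x) / t ≤ f y - f x := by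
    filter_upwards [Ioc_mem_nhdsGT one_pos] with t ht
    have hxy : (1 - t) • x + t • y = x + t • (y - x) := by
      rw [smul_sub, sub_smul, one_smul]; abel
    have hcv := hf.2 (mem_univ x) (mem_univ y) (by linarith [ht.2] : (0:ℝ) ≤ 1 - t)
      ht.1.le (by ring)
    rw [hxy] at hcv
    rw [div_le_iff₀ ht.1]
    simp only [smul_eq_mul] at hcv
    nlinarith
  have := le_of_tendsto (aux_tendsto h (y - x)) key
  linarith

/-- Gradient inequality for strongly convex functions. -/
lemma strong_grad_ineq {f : F → ℝ} {μ : ℝ} (hf : StrongConvexOn univ μ f) {f'x x : F}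
    (h : HasGradientAt f f'x x) (y : F) :
    f x + ⟪f'x, y - x⟫ + μ / 2 * ‖y - x‖ ^ 2 ≤ f y := by
  have key : ∀ᶠ t in 𝓝[>] (0:ℝ),
      (f (x + t • (y - x)) - f x) / t ≤ f y - f x - (1 - t) * (μ / 2 * ‖y - x‖ ^ 2) := by
    filter_upwards [Ioc_mem_nhdsGT one_pos] with t ht
    have hxy : (1 - t) • x + t • y = x + t • (y - x) := by
      rw [smul_sub, sub_smul, one_smul]; abel
    have hcv := hf.2 (mem_univ x) (mem_univ y) (by linarith [ht.2] : (0:ℝ) ≤ 1 - t)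
      ht.1.le (by ring)
    rw [hxy] at hcv
    simp only [smul_eq_mul] at hcv
    rw [div_le_iff₀ ht.1]
    have hnorm : ‖x - y‖ = ‖y - x‖ := norm_sub_rev _ _
    rw [hnorm] at hcv
    nlinarith
  have htend : Tendsto (fun t : ℝ => f y - f x - (1 - t) * (μ / 2 * ‖y - x‖ ^ 2)) (𝓝[>] (0:ℝ))
      (𝓝 (f y - f x - (1 - 0) * (μ / 2 * ‖y - x‖ ^ 2))) := by
    apply Tendsto.mono_left _ nhdsWithin_le_nhds
    exact (tendsto_const_nhds.sub (((tendsto_const_nhds.sub tendsto_id)).mul tendsto_const_nhds))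
  have := le_of_tendsto_of_tendsto (aux_tendsto h (y - x)) htend key
  simp only [sub_zero, one_mul] at this
  linarith

/-- Strong monotonicity of the gradient of a strongly convex function. -/
lemma strong_mono {f : F → ℝ} (f' : F → F) {μ : ℝ} (hsc : StrongConvexOn univ μ f)
    (hgrad : ∀ x, HasGradientAt f (f' x) x) (x y : F) :
    μ * ‖y - x‖ ^ 2 ≤ ⟪f' y - f' x, y - x⟫ := by
  have h1 := strong_grad_ineq hsc (hgrad x) y
  have h2 := strong_grad_ineq hsc (hgrad y) x
  have e1 : ⟪f' y, x - y⟫ = -⟪f' y, y - x⟫ := by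
    rw [show x - y = -(y - x) by abel, inner_neg_right]
  have e2 : ⟪f' y - f' x, y - x⟫ = ⟪f' y, y - x⟫ - ⟪f' x, y - x⟫ := inner_sub_left _ _ _
  have e3 : ‖x - y‖ = ‖y - x‖ := norm_sub_rev _ _
  rw [e1, e3] at h2
  linarith

/-- Descent lemma: quadratic upper bound from Lipschitz gradient. -/
lemma descent_lemma {f : F → ℝ} (f' : F → F) {L : ℝ} (hL : 0 < L)
    (hgrad : ∀ x, HasGradientAt f (f' x) x) (hLip : LipschitzWith L.toNNReal f')
    (a b : F) : f b ≤ f a + ⟪f' a, b - a⟫ + L / 2 * ‖b - a‖ ^ 2 := by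
  set d := b - a with hd
  have hcurve : ∀ t : ℝ, HasDerivAt (fun s : ℝ => f (a + s • d)) ⟪f' (a + t • d), d⟫ t := by
    intro t
    have hc : HasDerivAt (fun s : ℝ => a + s • d) d t := by
      simpa using ((hasDerivAt_id t).smul_const d).const_add a
    exact
      ((hgrad (a + t • d)).hasFDerivAt.comp_hasDerivAt t hc)
  have hcont : Continuous fun t : ℝ => ⟪f' (a + t • d), d⟫ := by
    have hc1 : Continuous fun t : ℝ => f' (a + t • d) :=
      hLip.continuous.comp (by continuity)
    exact hc1.inner continuous_const
  have hFTC : (∫ t in (0:ℝ)..1, ⟪f' (a + t • d), d⟫) = f (a + (1:ℝ) • d) - f (a + (0:ℝ) • d) :=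
    intervalIntegral.integral_eq_sub_of_hasDerivAt (fun t _ => hcurve t)
      (hcont.intervalIntegrable 0 1)
  have hbound : ∀ t ∈ Icc (0:ℝ) 1,
      ⟪f' (a + t • d), d⟫ ≤ ⟪f' a, d⟫ + (L * ‖d‖ ^ 2) * t := by
    intro t ht
    have h1 : ⟪f' (a + t • d) - f' a, d⟫ ≤ ‖f' (a + t • d) - f' a‖ * ‖d‖ :=
      real_inner_le_norm _ _
    have h2 : ‖f' (a + t • d) - f' a‖ ≤ L * (t * ‖d‖) := by
      have h3 := hLip.dist_le_mul (a + t • d) a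
      rw [dist_eq_norm, dist_eq_norm] at h3
      have h4 : a + t • d - a = t • d := by abel
      rw [h4, norm_smul, Real.norm_eq_abs, abs_of_nonneg ht.1] at h3
      calc ‖f' (a + t • d) - f' a‖ ≤ L.toNNReal * (t * ‖d‖) := h3
        _ ≤ L * (t * ‖d‖) := by
            have : (L.toNNReal : ℝ) = L := Real.coe_toNNReal L hL.le
            rw [this]
    have h3 : ⟪f' (a + t • d), d⟫ = ⟪f' a, d⟫ + ⟪f' (a + t • d) - f' a, d⟫ := by
      rw [inner_sub_left]; ring
    have h5 : ‖f' (a + t • d) - f' a‖ * ‖d‖ ≤ L * (t * ‖d‖) * ‖d‖ :=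
      mul_le_mul_of_nonneg_right h2 (norm_nonneg _)
    rw [h3]
    have : L * (t * ‖d‖) * ‖d‖ = (L * ‖d‖ ^ 2) * t := by ring
    linarith [h1.trans (h5.trans_eq this)]
  have hintble2 : IntervalIntegrable (fun t : ℝ => ⟪f' a, d⟫ + (L * ‖d‖ ^ 2) * t)
      MeasureTheory.volume 0 1 := by
    apply Continuous.intervalIntegrable; continuity
  have hmono := intervalIntegral.integral_mono_on (by norm_num : (0:ℝ) ≤ 1)
    (hcont.intervalIntegrable 0 1) hintble2 hbound
  have hval : (∫ t in (0:ℝ)..1, (⟪f' a, d⟫ + (L * ‖d‖ ^ 2) * t))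
      = ⟪f' a, d⟫ + L / 2 * ‖d‖ ^ 2 := by
    rw [intervalIntegral.integral_add (intervalIntegrable_const)
      (by apply Continuous.intervalIntegrable; continuity),
      intervalIntegral.integral_const_mul, integral_id]
    simp; ring
  rw [hFTC] at hmono
  rw [hval] at hmono
  have he1 : a + (1:ℝ) • d = b := by rw [one_smul, hd]; abel
  have he0 : a + (0:ℝ) • d = a := by rw [zero_smul, add_zero]
  rw [he1, he0] at hmono
  linarith

/-- Co-coercivity (Baillon–Haddad): for convex `f` with `L`-Lipschitz gradient. -/
lemma cocoercive {f : F → ℝ} (f' : F → F) {L : ℝ} (hL : 0 < L)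
    (hf : ConvexOn ℝ univ f)
    (hgrad : ∀ x, HasGradientAt f (f' x) x) (hLip : LipschitzWith L.toNNReal f')
    (x y : F) : (1 / L) * ‖f' y - f' x‖ ^ 2 ≤ ⟪f' y - f' x, y - x⟫ := by
  have half : ∀ u w : F, (1 / (2 * L)) * ‖f' w - f' u‖ ^ 2 ≤ f w - f u - ⟪f' u, w - u⟫ := by
    intro u w
    set φ : F → ℝ := fun z => f z - ⟪f' u, z⟫ with hφ
    set φ' : F → F := fun z => f' z - f' u with hφ'
    have hφgrad : ∀ z, HasGradientAt φ (φ' z) z := by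
      intro z
      have h1 := (hgrad z).hasFDerivAt
      have h2 : HasFDerivAt (fun z : F => ⟪f' u, z⟫) (toDual ℝ F (f' u)) z := by
        have := (toDual ℝ F (f' u)).hasFDerivAt (x := z)
        exact this
      have h3 := h1.sub h2
      rw [hφ']
      rw [hasGradientAt_iff_hasFDerivAt, map_sub]
      exact h3
    have hφconv : ConvexOn ℝ univ φ := by
      refine ⟨convex_univ, fun p _ q _ c e hc he hce => ?_⟩
      have h4 := hf.2 (mem_univ p) (mem_univ q) hc he hce
      simp only [hφ, smul_eq_mul]
      rw [inner_add_right, real_inner_smul_right, real_inner_smul_right]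
      simp only [smul_eq_mul] at h4
      linarith
    have hφLip : LipschitzWith L.toNNReal φ' := LipschitzWith.of_dist_le_mul fun p q => by
      have := hLip.dist_le_mul p q
      simpa [hφ', dist_eq_norm, sub_sub_sub_cancel_right] using this
    have hmin : ∀ z, φ u ≤ φ z := by
      intro z
      have h5 := convex_grad_ineq hφconv (hφgrad u) z
      have h6 : φ' u = 0 := by simp [hφ']
      rw [h6] at h5
      simpa using h5
    have hdesc := descent_lemma φ' hL hφgrad hφLip w (w - L⁻¹ • φ' w)
    have h7 := hmin (w - L⁻¹ • φ' w)
    have e1 : w - L⁻¹ • φ' w - w = -(L⁻¹ • φ' w) := by abel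
    rw [e1] at hdesc
    rw [inner_neg_right, real_inner_smul_right, real_inner_self_eq_norm_sq] at hdesc
    rw [norm_neg, norm_smul, Real.norm_eq_abs, abs_of_nonneg (inv_nonneg.mpr hL.le),
      mul_pow] at hdesc
    have key : φ u + (1 / (2 * L)) * ‖φ' w‖ ^ 2 ≤ φ w := by
      have hL' : L⁻¹ * L = 1 := inv_mul_cancel₀ hL.ne'
      have : L / 2 * ((L⁻¹) ^ 2 * ‖φ' w‖ ^ 2) = (1 / (2 * L)) * ‖φ' w‖ ^ 2 := by
        field_simp
      rw [this] at hdesc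
      have h8 : L⁻¹ * ‖φ' w‖ ^ 2 = (1 / L) * ‖φ' w‖ ^ 2 := by rw [one_div]
      have h9 : (1 / L) * ‖φ' w‖ ^ 2 - (1 / (2 * L)) * ‖φ' w‖ ^ 2
          = (1 / (2 * L)) * ‖φ' w‖ ^ 2 := by field_simp; ring
      nlinarith [h7.trans hdesc]
    have e2 : φ u = f u - ⟪f' u, u⟫ := rfl
    have e3 : φ w = f w - ⟪f' u, w⟫ := rfl
    have e4 : φ' w = f' w - f' u := rfl
    rw [e2, e3, e4] at key
    rw [inner_sub_right]
    linarith
  have h1 := half x y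
  have h2 := half y x
  have e1 : ‖f' x - f' y‖ = ‖f' y - f' x‖ := norm_sub_rev _ _
  have e2 : ⟪f' y, x - y⟫ = -⟪f' y, y - x⟫ := by
    rw [show x - y = -(y - x) by abel, inner_neg_right]
  have e3 : ⟪f' y - f' x, y - x⟫ = ⟪f' y, y - x⟫ - ⟪f' x, y - x⟫ := inner_sub_left _ _ _
  rw [e1, e2] at h2
  have hsum : (1 / L) * ‖f' y - f' x‖ ^ 2 = (1 / (2 * L)) * ‖f' y - f' x‖ ^ 2
      + (1 / (2 * L)) * ‖f' y - f' x‖ ^ 2 := by field_simp; ring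
  rw [hsum, e3]
  linarith

/-- Characterization of the prox minimizer. -/
lemma prox_char {c : F → ℝ} (hc : ConvexOn ℝ univ c) {v p : F}
    (hmin : IsMinOn (fun y => c y + (1 / 2) * ‖y - v‖ ^ 2) univ p) (z : F) :
    ⟪v - p, z - p⟫ ≤ c z - c p := by
  have key : ∀ᶠ t in 𝓝[>] (0:ℝ),
      0 ≤ (c z - c p) + ⟪p - v, z - p⟫ + t / 2 * ‖z - p‖ ^ 2 := by
    filter_upwards [Ioc_mem_nhdsGT one_pos] with t ht
    have hxy : (1 - t) • p + t • z = p + t • (z - p) := by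
      rw [smul_sub, sub_smul, one_smul]; abel
    have hcv := hc.2 (mem_univ p) (mem_univ z) (by linarith [ht.2] : (0:ℝ) ≤ 1 - t)
      ht.1.le (by ring)
    rw [hxy] at hcv
    simp only [smul_eq_mul] at hcv
    have hm := isMinOn_iff.mp hmin (p + t • (z - p)) (mem_univ _)
    have hexp : ‖p + t • (z - p) - v‖ ^ 2
        = ‖p - v‖ ^ 2 + 2 * (t * ⟪p - v, z - p⟫) + t ^ 2 * ‖z - p‖ ^ 2 := by
      have : p + t • (z - p) - v = (p - v) + t • (z - p) := by abel
      rw [this, norm_add_sq_real, real_inner_smul_right, norm_smul, Real.norm_eq_abs,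
        abs_of_nonneg ht.1.le, mul_pow]
    rw [hexp] at hm
    have htX : 0 ≤ t * ((c z - c p) + ⟪p - v, z - p⟫ + t / 2 * ‖z - p‖ ^ 2) := by nlinarith
    nlinarith [htX, ht.1, mul_pos ht.1 ht.1]
  have htend : Tendsto (fun t : ℝ => (c z - c p) + ⟪p - v, z - p⟫ + t / 2 * ‖z - p‖ ^ 2)
      (𝓝[>] (0:ℝ)) (𝓝 ((c z - c p) + ⟪p - v, z - p⟫ + 0 / 2 * ‖z - p‖ ^ 2)) := by
    apply Tendsto.mono_left _ nhdsWithin_le_nhds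
    apply Tendsto.add tendsto_const_nhds
    exact (tendsto_id.div_const 2).mul_const _
  have h0 := ge_of_tendsto htend key
  have e1 : ⟪p - v, z - p⟫ = -⟪v - p, z - p⟫ := by
    rw [show p - v = -(v - p) by abel, inner_neg_left]
  rw [e1] at h0
  simp only [zero_div, zero_mul, add_zero] at h0
  linarith

/-- Variational inequality at the minimizer of f + g. -/
lemma min_var_ineq {f g : F → ℝ} (hg : ConvexOn ℝ univ g) {f'x x : F}
    (h : HasGradientAt f f'x x) (hmin : IsMinOn (fun y => f y + g y) univ x) (z : F) :
    g x - g z ≤ ⟪f'x, z - x⟫ := by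
  have key : ∀ᶠ t in 𝓝[>] (0:ℝ), g x - g z ≤ (f (x + t • (z - x)) - f x) / t := by
    filter_upwards [Ioc_mem_nhdsGT one_pos] with t ht
    have hxy : (1 - t) • x + t • z = x + t • (z - x) := by
      rw [smul_sub, sub_smul, one_smul]; abel
    have hcv := hg.2 (mem_univ x) (mem_univ z) (by linarith [ht.2] : (0:ℝ) ≤ 1 - t)
      ht.1.le (by ring)
    rw [hxy] at hcv
    simp only [smul_eq_mul] at hcv
    have hm := isMinOn_iff.mp hmin (x + t • (z - x)) (mem_univ _)
    rw [le_div_iff₀ ht.1]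
    nlinarith
  exact ge_of_tendsto (aux_tendsto h (z - x)) key

/-- Linear contraction of the proximal gradient step for a μ-strongly convex, L-smooth f
plus a proper closed convex g, with step-size α ∈ (0, 1/L]. -/
theorem stmt8 {N : ℕ} (f g : EuclideanSpace ℝ (Fin N) → ℝ)
    (f' : EuclideanSpace ℝ (Fin N) → EuclideanSpace ℝ (Fin N))
    (μ L : ℝ) (hμ : 0 < μ) (hμL : μ ≤ L)
    (hgrad : ∀ x, HasGradientAt f (f' x) x)
    (hsc : StrongConvexOn Set.univ μ f)
    (hLip : LipschitzWith (Real.toNNReal L) f')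
    (hgconv : ConvexOn ℝ Set.univ g) (hgclosed : LowerSemicontinuous g)
    (α : ℝ) (hα : α ∈ Set.Ioc 0 (1 / L))
    (Y Yp Ystar : EuclideanSpace ℝ (Fin N))
    (hYp : IsMinOn (fun y => α * g y + (1 / 2) * ‖y - (Y - α • f' Y)‖ ^ 2) Set.univ Yp)
    (hYstar : IsMinOn (fun y => f y + g y) Set.univ Ystar) :
    ‖Yp - Ystar‖ ^ 2 ≤ (1 - μ * α) * ‖Y - Ystar‖ ^ 2 := by
  obtain ⟨hα0, hα1⟩ := hα
  have hL : 0 < L := lt_of_lt_of_le hμ hμL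
  have hαL : α * L ≤ 1 := by
    rw [le_div_iff₀ hL] at hα1; exact hα1
  have hfconv : ConvexOn ℝ univ f := strongConvexOn_zero.mp (hsc.mono hμ.le)
  have hgconv' : ConvexOn ℝ univ (fun y => α * g y) := by
    simpa [smul_eq_mul] using hgconv.smul hα0.le
  -- I1 : prox characterization at Yp with z = Ystar
  have I1 : ⟪(Y - α • f' Y) - Yp, Ystar - Yp⟫ ≤ α * g Ystar - α * g Yp :=
    prox_char hgconv' hYp Ystar
  -- I2 : variational inequality at Ystar with z = Yp
  have I2 : g Ystar - g Yp ≤ ⟪f' Ystar, Yp - Ystar⟫ :=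
    min_var_ineq hgconv (hgrad Ystar) hYstar Yp
  set d : EuclideanSpace ℝ (Fin N) := Yp - Ystar with hd
  set u : EuclideanSpace ℝ (Fin N) := Y - Ystar with hu
  set Δ : EuclideanSpace ℝ (Fin N) := f' Y - f' Ystar with hΔ
  set w : EuclideanSpace ℝ (Fin N) := u - α • Δ with hw
  -- Combine I1, I2 : ‖d‖² ≤ ⟪w, d⟫
  have hI2' : α * (g Ystar - g Yp) ≤ α * ⟪f' Ystar, Yp - Ystar⟫ :=
    mul_le_mul_of_nonneg_left I2 hα0.le
  have eneg : Ystar - Yp = -d := by rw [hd]; abel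
  rw [eneg, inner_neg_right] at I1
  -- so : -⟪(Y - α•f' Y) - Yp, d⟫ ≤ α g Ystar - α g Yp ≤ α ⟪f' Ystar, d⟫
  have hcomb : 0 ≤ ⟪((Y - α • f' Y) - Yp) + α • f' Ystar, d⟫ := by
    rw [inner_add_left, real_inner_smul_left]
    have h2' : α * g Ystar - α * g Yp ≤ α * ⟪f' Ystar, d⟫ := by
      rw [hd]; linarith [hI2']
    linarith
  have hwd : w - d = ((Y - α • f' Y) - Yp) + α • f' Ystar := by
    rw [hw, hu, hΔ, hd, smul_sub]; abel
  have key : ‖d‖ ^ 2 ≤ ⟪w, d⟫ := by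
    have h1 : 0 ≤ ⟪w - d, d⟫ := by rw [hwd]; exact hcomb
    rw [inner_sub_left, real_inner_self_eq_norm_sq] at h1
    linarith
  -- ‖d‖² ≤ ‖w‖²
  have hd2 : ‖d‖ ^ 2 ≤ ‖w‖ ^ 2 := by
    have h1 : ⟪w, d⟫ ≤ ‖w‖ * ‖d‖ := real_inner_le_norm _ _
    nlinarith [norm_nonneg d, norm_nonneg w, sq_nonneg (‖w‖ - ‖d‖)]
  -- gradient step contraction : ‖w‖² ≤ (1 - μα)‖u‖²
  have hmono := strong_mono f' hsc hgrad Ystar Y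
  have hcc := cocoercive f' hL hfconv hgrad hLip Ystar Y
  rw [← hu, ← hΔ] at hmono hcc
  set P : ℝ := ⟪Δ, u⟫ with hP
  have hP0 : 0 ≤ P := le_trans (by positivity) hmono
  have hΔ2 : ‖Δ‖ ^ 2 ≤ L * P := by
    have := mul_le_mul_of_nonneg_left hcc hL.le
    calc ‖Δ‖ ^ 2 = L * ((1 / L) * ‖Δ‖ ^ 2) := by field_simp
      _ ≤ L * P := this
  have hwsq : ‖w‖ ^ 2 = ‖u‖ ^ 2 - 2 * α * P + α ^ 2 * ‖Δ‖ ^ 2 := by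
    rw [hw, norm_sub_sq_real, real_inner_smul_right, norm_smul, Real.norm_eq_abs,
      abs_of_nonneg hα0.le, mul_pow, hP, real_inner_comm]
    ring
  have hfin : ‖w‖ ^ 2 ≤ (1 - μ * α) * ‖u‖ ^ 2 := by
    have h1 : α ^ 2 * ‖Δ‖ ^ 2 ≤ α ^ 2 * (L * P) :=
      mul_le_mul_of_nonneg_left hΔ2 (sq_nonneg α)
    have h2 : α ^ 2 * (L * P) ≤ α * P := by
      nlinarith [mul_nonneg (mul_nonneg hα0.le hP0) (by linarith : (0:ℝ) ≤ 1 - α * L)]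
    have h3 : α * (μ * ‖u‖ ^ 2) ≤ α * P := mul_le_mul_of_nonneg_left hmono hα0.le
    nlinarith
  calc ‖Yp - Ystar‖ ^ 2 = ‖d‖ ^ 2 := by rw [hd]
    _ ≤ ‖w‖ ^ 2 := hd2
    _ ≤ (1 - μ * α) * ‖u‖ ^ 2 := hfin
    _ = (1 - μ * α) * ‖Y - Ystar‖ ^ 2 := by rw [hu]
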